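/- Let m ≥ 1 be an integer and p, q real numbers with q ≠ 0 and p² > 4(2m+3)q². Set D = √(p² − 4(2m+3)q²), r₁ = (p + D)/((2m+3)q²), r₂ = (p − D)/((2m+3)q²), A = ((4m+3)p − 3D)/(2(2m+3)D), and B = ((4m+3)p + 3D)/(2(2m+3)D). Suppose a, b : I → ℝ are differentiable and positive on an open interval I, solve the ODE system a' = 4 + 2m q² a²/b², b' = 2p − 3q² a/b, and a(τ)/b(τ) ∉ {r₁, r₂} for all τ ∈ I. Then the function τ ↦ |a/b − r₁|^{A} · |a/b − r₂|^{−B} · b^{−1} is constant on I. -/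

import Mathlib

/-- the first integral `|a/b − r₁|^A · |a/b − r₂|^{−B} · b⁻¹ = const` of the
SU(2)-bundle Ricci flow ODE system `a' = 4 + 2mq²a²/b²`, `b' = 2p − 3q²a/b`. -/
theorem stmt_16 (m : ℕ) (hm : 1 ≤ m) (p q : ℝ) (hq : q ≠ 0)
    (hpq : p ^ 2 > 4 * (2 * (m : ℝ) + 3) * q ^ 2)
    (D r₁ r₂ A B : ℝ)
    (hD : D = Real.sqrt (p ^ 2 - 4 * (2 * (m : ℝ) + 3) * q ^ 2))
    (hr₁ : r₁ = (p + D) / ((2 * (m : ℝ) + 3) * q ^ 2))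
    (hr₂ : r₂ = (p - D) / ((2 * (m : ℝ) + 3) * q ^ 2))
    (hA : A = ((4 * (m : ℝ) + 3) * p - 3 * D) / (2 * (2 * (m : ℝ) + 3) * D))
    (hB : B = ((4 * (m : ℝ) + 3) * p + 3 * D) / (2 * (2 * (m : ℝ) + 3) * D))
    (s t : ℝ) (a b : ℝ → ℝ)
    (hapos : ∀ τ ∈ Set.Ioo s t, 0 < a τ)
    (hbpos : ∀ τ ∈ Set.Ioo s t, 0 < b τ)
    (ha : ∀ τ ∈ Set.Ioo s t,
      HasDerivAt a (4 + 2 * (m : ℝ) * q ^ 2 * (a τ) ^ 2 / (b τ) ^ 2) τ)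
    (hb : ∀ τ ∈ Set.Ioo s t, HasDerivAt b (2 * p - 3 * q ^ 2 * (a τ / b τ)) τ)
    (hy : ∀ τ ∈ Set.Ioo s t, a τ / b τ ≠ r₁ ∧ a τ / b τ ≠ r₂) :
    ∃ C : ℝ, ∀ τ ∈ Set.Ioo s t,
      |a τ / b τ - r₁| ^ A * |a τ / b τ - r₂| ^ (-B) * (b τ)⁻¹ = C := by
  rcases Set.eq_empty_or_nonempty (Set.Ioo s t) with he | ⟨τ₀, hτ₀⟩
  · exact ⟨0, fun τ hτ => absurd hτ (by simp [he])⟩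
  set K : ℝ := (2 * (m : ℝ) + 3) * q ^ 2 with hK
  have hKpos : 0 < K := by positivity
  have hKne : K ≠ 0 := ne_of_gt hKpos
  have hppos : 0 < p ^ 2 - 4 * (2 * (m : ℝ) + 3) * q ^ 2 := by linarith
  have hDpos : 0 < D := hD ▸ Real.sqrt_pos.2 hppos
  have hDne : D ≠ 0 := ne_of_gt hDpos
  have hD2 : D ^ 2 = p ^ 2 - 4 * (2 * (m : ℝ) + 3) * q ^ 2 := by
    rw [hD, Real.sq_sqrt hppos.le]
  have hsum : K * (r₁ + r₂) = 2 * p := by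
    rw [hr₁, hr₂]; field_simp; ring
  have hprod : K * (r₁ * r₂) = 4 := by
    rw [hr₁, hr₂, hK]; field_simp
    linear_combination (-1 : ℝ) * hD2
  have key : ∀ y z : ℝ, K * (A * (y - r₂ * z) - B * (y - r₁ * z)) =
      2 * p * z - 3 * q ^ 2 * y := by
    intro y z
    rw [hA, hB, hr₁, hr₂, hK]; field_simp; ring
  set F : ℝ → ℝ := fun τ =>
    A * Real.log (a τ / b τ - r₁) - B * Real.log (a τ / b τ - r₂) - Real.log (b τ) with hF
  have hFderiv : ∀ τ ∈ Set.Ioo s t, HasDerivAt F 0 τ := by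
    intro τ hτ
    have hb0 : b τ ≠ 0 := ne_of_gt (hbpos τ hτ)
    obtain ⟨hy1, hy2⟩ := hy τ hτ
    have hy1' : a τ / b τ - r₁ ≠ 0 := sub_ne_zero.2 hy1
    have hy2' : a τ / b τ - r₂ ≠ 0 := sub_ne_zero.2 hy2
    have hquot :
        HasDerivAt (fun τ => a τ / b τ)
          (((4 + 2 * (m : ℝ) * q ^ 2 * (a τ) ^ 2 / (b τ) ^ 2) * b τ -
            a τ * (2 * p - 3 * q ^ 2 * (a τ / b τ))) / (b τ) ^ 2) τ :=
      (ha τ hτ).div (hb τ hτ) hb0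
    have hfact : K * (a τ / b τ - r₁) * (a τ / b τ - r₂) =
        K * (a τ / b τ) ^ 2 - 2 * p * (a τ / b τ) + 4 := by
      linear_combination (-(a τ / b τ)) * hsum + hprod
    have hyd :
        ((4 + 2 * (m : ℝ) * q ^ 2 * (a τ) ^ 2 / (b τ) ^ 2) * b τ -
            a τ * (2 * p - 3 * q ^ 2 * (a τ / b τ))) / (b τ) ^ 2 =
          K * (a τ / b τ - r₁) * (a τ / b τ - r₂) / b τ := by
      rw [div_eq_div_iff (by positivity) hb0, hfact, hK]
      field_simp
      ring
    rw [hyd] at hquot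
    have h1 : HasDerivAt (fun τ => Real.log (a τ / b τ - r₁))
        (K * (a τ / b τ - r₁) * (a τ / b τ - r₂) / b τ / (a τ / b τ - r₁)) τ :=
      (hquot.sub_const r₁).log hy1'
    have h2 : HasDerivAt (fun τ => Real.log (a τ / b τ - r₂))
        (K * (a τ / b τ - r₁) * (a τ / b τ - r₂) / b τ / (a τ / b τ - r₂)) τ :=
      (hquot.sub_const r₂).log hy2'
    have h3 : HasDerivAt (fun τ => Real.log (b τ))
        ((2 * p - 3 * q ^ 2 * (a τ / b τ)) / b τ) τ := (hb τ hτ).log hb0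
    have htot := ((h1.const_mul A).sub (h2.const_mul B)).sub h3
    refine htot.congr_deriv ?_
    have aux : ∀ x y z w : ℝ, y ≠ 0 → w ≠ 0 → x * y * z / w / y = x * z / w := by
      intro x y z w hy hw; field_simp
    have aux2 : ∀ x y z w : ℝ, z ≠ 0 → w ≠ 0 → x * y * z / w / z = x * y / w := by
      intro x y z w hz hw; field_simp
    have e1 : K * (a τ / b τ - r₁) * (a τ / b τ - r₂) / b τ / (a τ / b τ - r₁) =
        K * (a τ / b τ - r₂) / b τ := aux K _ _ _ hy1' hb0
    have e2 : K * (a τ / b τ - r₁) * (a τ / b τ - r₂) / b τ / (a τ / b τ - r₂) =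
        K * (a τ / b τ - r₁) / b τ := aux2 K _ _ _ hy2' hb0
    rw [e1, e2]
    have hkey := key (a τ) (b τ)
    rw [sub_eq_zero]
    field_simp
    linear_combination hkey
  have hconst : ∀ τ ∈ Set.Ioo s t, F τ = F τ₀ := by
    intro τ hτ
    refine (convex_Ioo s t).is_const_of_fderivWithin_eq_zero
      (fun x hx => ((hFderiv x hx).differentiableAt).differentiableWithinAt)
      (fun x hx => ?_) hτ hτ₀
    have := ((hFderiv x hx).hasFDerivAt.hasFDerivWithinAt).fderivWithin
      ((isOpen_Ioo).uniqueDiffWithinAt hx)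
    rw [this]
    ext v
    simp
  refine ⟨Real.exp (F τ₀), fun τ hτ => ?_⟩
  have hb0 : 0 < b τ := hbpos τ hτ
  obtain ⟨hy1, hy2⟩ := hy τ hτ
  have hy1' : a τ / b τ - r₁ ≠ 0 := sub_ne_zero.2 hy1
  have hy2' : a τ / b τ - r₂ ≠ 0 := sub_ne_zero.2 hy2
  rw [← hconst τ hτ, hF]
  rw [Real.exp_sub, Real.exp_sub, Real.exp_log hb0]
  rw [Real.rpow_def_of_pos (abs_pos.2 hy1'), Real.rpow_def_of_pos (abs_pos.2 hy2')]
  rw [Real.log_abs, Real.log_abs]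
  rw [show Real.log (a τ / b τ - r₂) * (-B) = -(B * Real.log (a τ / b τ - r₂)) by ring,
    Real.exp_neg, mul_comm (Real.log (a τ / b τ - r₁)) A]
  ring
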